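/- Let {X_v}_{v in V(H)} be a minimal induced minor model of a graph H in a graph G, and let v be a vertex of H. For every vertex w in X_v whose degree in the subgraph of G induced by X_v is one, there exists a vertex u of H distinct from v such that w is the only vertex of X_v having a neighbor in X_u. -/
import Mathlib


open SimpleGraph

/-! Basic notions: seeing, anticompleteness, completeness between vertex sets. -/

/-- `Sees G X Y` : some vertex of `X` is adjacent (in `G`) to some vertex of `Y`. -/
def Sees {V : Type} (G : SimpleGraph V) (X Y : Set V) : Prop :=
  ∃ x ∈ X, ∃ y ∈ Y, G.Adj x y

/-- `X` is anticomplete to `Y` : there is no edge between `X` and `Y`. -/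
def Anticomplete {V : Type} (G : SimpleGraph V) (X Y : Set V) : Prop :=
  ∀ x ∈ X, ∀ y ∈ Y, ¬G.Adj x y

/-- `X` is complete to `Y` : every vertex of `X` is adjacent to every vertex of `Y`. -/
def CompleteTo {V : Type} (G : SimpleGraph V) (X Y : Set V) : Prop :=
  ∀ x ∈ X, ∀ y ∈ Y, G.Adj x y

/-- A chordless (induced) path of `G` with all vertices in `A`, given by an injective
enumeration `p` of its vertices, consecutive vertices being exactly the adjacent pairs. -/
def IsPathIn {V : Type} (G : SimpleGraph V) (A : Set V) {n : ℕ} (p : Fin (n + 1) → V) : Prop :=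
  Function.Injective p ∧ (∀ i, p i ∈ A) ∧
    ∀ i j, G.Adj (p i) (p j) ↔ (i.val + 1 = j.val ∨ j.val + 1 = i.val)

/-! Induced minors. -/

/-- An induced minor model of `H` in `G`: pairwise disjoint branch sets, each inducing a
connected subgraph, with an edge between two branch sets iff the corresponding vertices of
`H` are adjacent. -/
def IsInducedMinorModel {V W : Type} (G : SimpleGraph V) (H : SimpleGraph W)
    (X : W → Set V) : Prop :=
  (∀ w, (X w).Nonempty) ∧
    (∀ w, (G.induce (X w)).Connected) ∧
    (Pairwise fun u w => Disjoint (X u) (X w)) ∧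
    (∀ u w, u ≠ w → (Sees G (X u) (X w) ↔ H.Adj u w))

/-- `G` contains `H` as an induced minor. -/
def ContainsInducedMinor {V W : Type} (G : SimpleGraph V) (H : SimpleGraph W) : Prop :=
  ∃ X : W → Set V, IsInducedMinorModel G H X

/-! Thetas, prisms, pyramids, 3-path configurations. -/

/-- The theta graph with two hub vertices (`Sum.inl 0`, `Sum.inl 1`) joined by three paths,
path `i` having length `k i` (hence `k i - 1` internal vertices). -/
def thetaGraph (k : Fin 3 → ℕ) :
    SimpleGraph (Fin 2 ⊕ (Σ i : Fin 3, Fin (k i - 1))) :=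
  SimpleGraph.fromRel fun u v =>
    match u, v with
    | Sum.inl a, Sum.inr ⟨i, j⟩ => (a = 0 ∧ j.val = 0) ∨ (a = 1 ∧ j.val = k i - 2)
    | Sum.inr ⟨i, j⟩, Sum.inr ⟨i', j'⟩ => i = i' ∧ j.val + 1 = j'.val
    | _, _ => False

/-- Admissible path lengths for a theta: all three paths have length at least two. -/
def ThetaLengths (k : Fin 3 → ℕ) : Prop := ∀ i, 2 ≤ k i

/-- The prism graph made of three paths, path `i` having length `l i` (so `l i + 1` vertices
`(i,0),…,(i,l i)`), with triangles on the vertices `(i,0)` and on the vertices `(i, l i)`. -/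
def prismGraph (l : Fin 3 → ℕ) : SimpleGraph (Σ i : Fin 3, Fin (l i + 1)) :=
  SimpleGraph.fromRel fun u v =>
    (u.1 = v.1 ∧ u.2.val + 1 = v.2.val) ∨
      (u.1 ≠ v.1 ∧ ((u.2.val = 0 ∧ v.2.val = 0) ∨ (u.2.val = l u.1 ∧ v.2.val = l v.1)))

/-- Admissible path lengths for a prism: all three paths have length at least one, or one
has length zero and the two others have length at least two. -/
def PrismLengths (l : Fin 3 → ℕ) : Prop :=
  (∀ i, 1 ≤ l i) ∨ (∃ i, l i = 0 ∧ ∀ j, j ≠ i → 2 ≤ l j)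

/-- The pyramid graph with apex `Sum.inl ()` and three paths, path `i` having length `m i`
(its vertices other than the apex being `(i,0),…,(i, m i - 1)`), whose far endpoints
`(i, m i - 1)` form a triangle. -/
def pyramidGraph (m : Fin 3 → ℕ) : SimpleGraph (Unit ⊕ (Σ i : Fin 3, Fin (m i))) :=
  SimpleGraph.fromRel fun u v =>
    match u, v with
    | Sum.inl _, Sum.inr ⟨_, j⟩ => j.val = 0
    | Sum.inr ⟨i, j⟩, Sum.inr ⟨i', j'⟩ =>
        (i = i' ∧ j.val + 1 = j'.val) ∨ (i ≠ i' ∧ j.val = m i - 1 ∧ j'.val = m i' - 1)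
    | _, _ => False

/-- Admissible path lengths for a pyramid: all of length at least one, at most one of
length exactly one. -/
def PyramidLengths (m : Fin 3 → ℕ) : Prop :=
  (∀ i, 1 ≤ m i) ∧ ∃ i, ∀ j, j ≠ i → 2 ≤ m j

/-- `G` contains a theta as an induced subgraph. -/
def ContainsTheta {V : Type} (G : SimpleGraph V) : Prop :=
  ∃ k, ThetaLengths k ∧ Nonempty (thetaGraph k ↪g G)

/-- `G` contains a prism as an induced subgraph. -/
def ContainsPrism {V : Type} (G : SimpleGraph V) : Prop :=
  ∃ l, PrismLengths l ∧ Nonempty (prismGraph l ↪g G)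

/-- `G` contains a pyramid as an induced subgraph. -/
def ContainsPyramid {V : Type} (G : SimpleGraph V) : Prop :=
  ∃ m, PyramidLengths m ∧ Nonempty (pyramidGraph m ↪g G)

/-- `G` contains a 3-path configuration as an induced subgraph. -/
def Contains3PC {V : Type} (G : SimpleGraph V) : Prop :=
  ContainsTheta G ∨ ContainsPrism G ∨ ContainsPyramid G

/-- `G` is (isomorphic to) a theta. -/
def IsThetaGraph {V : Type} (G : SimpleGraph V) : Prop :=
  ∃ k, ThetaLengths k ∧ Nonempty (thetaGraph k ≃g G)

/-- `G` is (isomorphic to) a prism. -/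
def IsPrismGraph {V : Type} (G : SimpleGraph V) : Prop :=
  ∃ l, PrismLengths l ∧ Nonempty (prismGraph l ≃g G)

/-- `G` is (isomorphic to) a pyramid. -/
def IsPyramidGraph {V : Type} (G : SimpleGraph V) : Prop :=
  ∃ m, PyramidLengths m ∧ Nonempty (pyramidGraph m ≃g G)

/-- `G` is a 3-path configuration. -/
def Is3PC {V : Type} (G : SimpleGraph V) : Prop :=
  IsThetaGraph G ∨ IsPrismGraph G ∨ IsPyramidGraph G

/-- `G` contains a triangle. -/
def ContainsTriangle {V : Type} (G : SimpleGraph V) : Prop :=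
  ∃ x y z : V, G.Adj x y ∧ G.Adj y z ∧ G.Adj x z

/-- `S` induces a hole (chordless cycle of length at least 4) in `G`. -/
def IsHole {V : Type} (G : SimpleGraph V) (S : Set V) : Prop :=
  ∃ n, 4 ≤ n ∧ Nonempty (SimpleGraph.cycleGraph n ≃g G.induce S)

/-- The `k × k` grid graph. -/
def gridGraph (k : ℕ) : SimpleGraph (Fin k × Fin k) :=
  SimpleGraph.fromRel fun p q => Nat.dist p.1.val q.1.val + Nat.dist p.2.val q.2.val = 1

/-! Types of connected sets with respect to three sets `X`, `Y`, `Z`. -/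

/-- `A` is of type path centered at `Y` with respect to `X`, `Y`, `Z`: there is a path
`P = x…z` in `A` such that `x` sees `X`, `z` sees `Z`, `P` sees `Y`, `P∖x` is anticomplete
to `X` and `P∖z` is anticomplete to `Z`. -/
def TypePathCenteredMid {V : Type} (G : SimpleGraph V) (A X Y Z : Set V) : Prop :=
  ∃ (n : ℕ) (p : Fin (n + 1) → V),
    IsPathIn G A p ∧
    Sees G {p 0} X ∧ Sees G {p (Fin.last n)} Z ∧ Sees G (Set.range p) Y ∧
    Anticomplete G (Set.range p \ {p 0}) X ∧
    Anticomplete G (Set.range p \ {p (Fin.last n)}) Z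

/-- `A` is of type path with respect to `X`, `Y`, `Z`: it is of type path centered at `X`,
at `Y`, or at `Z`. -/
def TypePath {V : Type} (G : SimpleGraph V) (A X Y Z : Set V) : Prop :=
  TypePathCenteredMid G A Y X Z ∨ TypePathCenteredMid G A X Y Z ∨ TypePathCenteredMid G A X Z Y

/-- `A` is of type claw with respect to `X`, `Y`, `Z`. -/
def TypeClaw {V : Type} (G : SimpleGraph V) (A X Y Z : Set V) : Prop :=
  ∃ (nP nQ nR : ℕ) (p : Fin (nP + 1) → V) (q : Fin (nQ + 1) → V) (r : Fin (nR + 1) → V),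
    IsPathIn G A p ∧ IsPathIn G A q ∧ IsPathIn G A r ∧
    p 0 = q 0 ∧ q 0 = r 0 ∧
    Set.range p ∩ Set.range q ∩ Set.range r = {p 0} ∧
    Anticomplete G (Set.range p \ {p 0}) (Set.range q \ {p 0}) ∧
    Anticomplete G (Set.range p \ {p 0}) (Set.range r \ {p 0}) ∧
    Anticomplete G (Set.range q \ {p 0}) (Set.range r \ {p 0}) ∧
    Sees G {p (Fin.last nP)} X ∧ Sees G {q (Fin.last nQ)} Y ∧ Sees G {r (Fin.last nR)} Z ∧
    Anticomplete G ((Set.range p ∪ Set.range q ∪ Set.range r) \ {p (Fin.last nP)}) X ∧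
    Anticomplete G ((Set.range p ∪ Set.range q ∪ Set.range r) \ {q (Fin.last nQ)}) Y ∧
    Anticomplete G ((Set.range p ∪ Set.range q ∪ Set.range r) \ {r (Fin.last nR)}) Z

/-- `A` is of type triangle with respect to `X`, `Y`, `Z`. -/
def TypeTriangle {V : Type} (G : SimpleGraph V) (A X Y Z : Set V) : Prop :=
  ∃ (nP nQ nR : ℕ) (p : Fin (nP + 1) → V) (q : Fin (nQ + 1) → V) (r : Fin (nR + 1) → V),
    IsPathIn G A p ∧ IsPathIn G A q ∧ IsPathIn G A r ∧
    Disjoint (Set.range p) (Set.range q) ∧ Disjoint (Set.range p) (Set.range r) ∧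
    Disjoint (Set.range q) (Set.range r) ∧
    G.Adj (p 0) (q 0) ∧ G.Adj (q 0) (r 0) ∧ G.Adj (p 0) (r 0) ∧
    (∀ u ∈ Set.range p, ∀ v ∈ Set.range q, G.Adj u v → u = p 0 ∧ v = q 0) ∧
    (∀ u ∈ Set.range q, ∀ v ∈ Set.range r, G.Adj u v → u = q 0 ∧ v = r 0) ∧
    (∀ u ∈ Set.range p, ∀ v ∈ Set.range r, G.Adj u v → u = p 0 ∧ v = r 0) ∧
    Sees G {p (Fin.last nP)} X ∧ Sees G {q (Fin.last nQ)} Y ∧ Sees G {r (Fin.last nR)} Z ∧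
    Anticomplete G ((Set.range p ∪ Set.range q ∪ Set.range r) \ {p (Fin.last nP)}) X ∧
    Anticomplete G ((Set.range p ∪ Set.range q ∪ Set.range r) \ {q (Fin.last nQ)}) Y ∧
    Anticomplete G ((Set.range p ∪ Set.range q ∪ Set.range r) \ {r (Fin.last nR)}) Z

/-! Line graphs and subdivisions. -/

/-- The line graph of `G`: vertices are the edges of `G`, two of them being adjacent iff
they are distinct and share an endpoint. -/
def LineGraph {V : Type} (G : SimpleGraph V) : SimpleGraph G.edgeSet :=
  SimpleGraph.fromRel fun e f => ∃ v : V, v ∈ (e : Sym2 V) ∧ v ∈ (f : Sym2 V)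

/-- The graph obtained from `G` by subdividing the edge `uv` once, the new vertex being
`Option.none`. -/
def subdivideEdge {V : Type} (G : SimpleGraph V) (u v : V) : SimpleGraph (Option V) :=
  SimpleGraph.fromRel fun a b =>
    match a, b with
    | some x, some y => G.Adj x y ∧ ¬(x = u ∧ y = v) ∧ ¬(x = v ∧ y = u)
    | some x, none => x = u ∨ x = v
    | _, _ => False

/-- `IsSubdivision G H` : `H` is (isomorphic to) a graph obtained from `G` by repeatedly
subdividing edges. -/
inductive IsSubdivision : {α : Type} → SimpleGraph α → {β : Type} → SimpleGraph β → Prop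
  | refl {α : Type} (G : SimpleGraph α) : IsSubdivision G G
  | step {α β : Type} {G : SimpleGraph α} {H : SimpleGraph β} {u v : β} :
      IsSubdivision G H → H.Adj u v → IsSubdivision G (subdivideEdge H u v)
  | iso {α β γ : Type} {G : SimpleGraph α} {H : SimpleGraph β} {H' : SimpleGraph γ} :
      IsSubdivision G H → (H ≃g H') → IsSubdivision G H'


/-- `w` with unique neighbor `y` cannot lie on a path between two vertices other than `w`. -/
private lemma path_avoid {V : Type} (G : SimpleGraph V) (w y : V)
    (huniq : ∀ z, G.Adj w z → z = y) :
    ∀ {a b : V} (p : G.Walk a b), p.IsPath → a ≠ w → b ≠ w → w ∉ p.support := by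
  intro a b p
  induction p with
  | nil => intro _ ha _ h; simp at h; exact ha h.symm
  | @cons a c b h p ih =>
    intro hp ha hb hmem
    rw [SimpleGraph.Walk.support_cons] at hmem
    rcases List.mem_cons.mp hmem with h1 | h1
    · exact ha h1.symm
    · by_cases hc : c = w
      · subst hc
        cases p with
        | nil => exact hb rfl
        | @cons c d b h' p' =>
          have hd : d = y := huniq d h'
          have ha' : a = y := huniq a h.symm
          have : a ∈ (SimpleGraph.Walk.cons h' p').support := by
            rw [SimpleGraph.Walk.support_cons]
            exact List.mem_cons_of_mem _ (by rw [ha', ← hd]; exact p'.start_mem_support)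
          exact ((SimpleGraph.Walk.cons_isPath_iff h _).mp hp).2 this
      · exact ih hp.of_cons hc hb h1

/-- Transfer a walk avoiding the complement of `s` into the induced subgraph on `s`. -/
private lemma reach_transfer {V : Type} (G : SimpleGraph V) (s : Set V) :
    ∀ {a b : V} (p : G.Walk a b) (hs : ∀ x ∈ p.support, x ∈ s),
      (G.induce s).Reachable ⟨a, hs a p.start_mem_support⟩ ⟨b, hs b p.end_mem_support⟩ := by
  intro a b p
  induction p with
  | nil => intro _; rfl
  | @cons a c b h p ih =>
    intro hs
    have hs' : ∀ x ∈ p.support, x ∈ s := fun x hx => hs x (by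
      rw [SimpleGraph.Walk.support_cons]; exact List.mem_cons_of_mem _ hx)
    have h1 : (G.induce s).Adj ⟨a, hs a (SimpleGraph.Walk.start_mem_support _)⟩
        ⟨c, hs' c p.start_mem_support⟩ := h
    exact h1.reachable.trans (ih hs')

/-- Removing a degree-one vertex keeps an induced subgraph connected. -/
private lemma leaf_removal {V : Type} (G : SimpleGraph V) (T : Set V)
    (hc : (G.induce T).Connected) (w y : V) (hwT : w ∈ T) (hyT : y ∈ T) (hwy : G.Adj w y)
    (huniq : ∀ z, z ∈ T → G.Adj w z → z = y) :
    (G.induce (T \ {w})).Connected := by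
  classical
  set G' : SimpleGraph T := G.induce T with hG'
  have hne : w ≠ y := hwy.ne
  have huniq' : ∀ z : T, G'.Adj ⟨w, hwT⟩ z → z = ⟨y, hyT⟩ := by
    rintro ⟨z, hz⟩ hadj
    exact Subtype.ext (huniq z hz hadj)
  -- connectivity of G'.induce {x | x ≠ ⟨w, hwT⟩}
  have key : (G'.induce {x : T | x ≠ ⟨w, hwT⟩}).Connected := by
    rw [SimpleGraph.connected_iff]
    constructor
    · rintro ⟨a, ha⟩ ⟨b, hb⟩
      obtain ⟨p⟩ := hc.preconnected a b
      have hp := p.toPath.2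
      have haw : a ≠ ⟨w, hwT⟩ := ha
      have hbw : b ≠ ⟨w, hwT⟩ := hb
      have havoid := path_avoid G' ⟨w, hwT⟩ ⟨y, hyT⟩ huniq' (p.toPath : G'.Walk a b) hp haw hbw
      have hs : ∀ x ∈ (p.toPath : G'.Walk a b).support, x ∈ {x : T | x ≠ ⟨w, hwT⟩} := by
        intro x hx hxw
        exact havoid (hxw ▸ hx)
      exact reach_transfer G' _ _ hs
    · exact ⟨⟨⟨y, hyT⟩, fun h => hne (congrArg Subtype.val h).symm⟩⟩
  -- transfer along the natural iso
  have e : G'.induce {x : T | x ≠ ⟨w, hwT⟩} ≃g G.induce (T \ {w}) := by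
    refine ⟨⟨fun x => ⟨x.1.1, x.1.2, fun h => x.2 (Subtype.ext h)⟩,
      fun x => ⟨⟨x.1, x.2.1⟩, fun h => x.2.2 (congrArg Subtype.val h)⟩, ?_, ?_⟩, ?_⟩
    · intro x; rfl
    · intro x; rfl
    · intro a b; rfl
  exact e.connected_iff.mp key

/-- If `{X_v}` is a minimal induced minor model of `H` in `G`, `v` is a
vertex of `H`, and `w ∈ X v` has degree one in the subgraph induced by `X v` (i.e. it has
a unique neighbor in `X v`), then there is `u ≠ v` such that `w` is the only vertex of
`X v` having a neighbor in `X u`. -/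
theorem statement_8 {V W : Type} [Fintype V] [Fintype W]
    (G : SimpleGraph V) (H : SimpleGraph W) (X : W → Set V)
    (hmodel : IsInducedMinorModel G H X)
    (hmin : ∀ a ∈ ⋃ w, X w, ¬ContainsInducedMinor (G.induce ((⋃ w, X w) \ {a})) H)
    (v : W) (w : V) (hw : w ∈ X v)
    (hdeg : ∃! y, y ∈ X v ∧ G.Adj w y) :
    ∃ u, u ≠ v ∧ {w' | w' ∈ X v ∧ ∃ y ∈ X u, G.Adj w' y} = {w} := by
  by_contra hcon
  push_neg at hcon
  obtain ⟨hne, hconn, hdisj, hsees⟩ := hmodel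
  obtain ⟨y, ⟨hyX, hwy⟩, hyuniq⟩ := hdeg
  set S := (⋃ u, X u) \ {w} with hS
  have hwU : w ∈ ⋃ u, X u := Set.mem_iUnion.mpr ⟨v, hw⟩
  apply hmin w hwU
  refine ⟨fun u => Subtype.val ⁻¹' (X u), ?_, ?_, ?_, ?_⟩
  · -- nonempty
    intro u
    by_cases hu : u = v
    · subst hu
      exact ⟨⟨y, Set.mem_iUnion.mpr ⟨u, hyX⟩, fun h => hwy.ne (h : y = w).symm⟩, hyX⟩
    · obtain ⟨x, hx⟩ := hne u
      have hxw : x ≠ w := fun h => Set.disjoint_left.mp (hdisj hu) hx (h ▸ hw)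
      exact ⟨⟨x, Set.mem_iUnion.mpr ⟨u, hx⟩, hxw⟩, hx⟩
  · -- connected
    intro u
    by_cases hu : u = v
    · subst hu
      have hlr := leaf_removal G (X u) (hconn u) w y hw hyX hwy
        (fun z hz hadj => hyuniq z ⟨hz, hadj⟩)
      have e : G.induce (X u \ {w}) ≃g
          (G.induce S).induce (Subtype.val ⁻¹' (X u)) := by
        refine ⟨⟨fun x => ⟨⟨x.1, Set.mem_iUnion.mpr ⟨u, x.2.1⟩, x.2.2⟩, x.2.1⟩,
          fun x => ⟨x.1.1, x.2, x.1.2.2⟩, ?_, ?_⟩, ?_⟩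
        · intro x; rfl
        · intro x; rfl
        · intro a b; rfl
      exact e.connected_iff.mp hlr
    · have hXS : X u ⊆ (⋃ u, X u) \ {w} := fun x hx =>
        ⟨Set.mem_iUnion.mpr ⟨u, hx⟩, fun h => Set.disjoint_left.mp (hdisj hu) hx ((h : x = w) ▸ hw)⟩
      have e : G.induce (X u) ≃g (G.induce S).induce (Subtype.val ⁻¹' (X u)) := by
        refine ⟨⟨fun x => ⟨⟨x.1, hXS x.2⟩, x.2⟩, fun x => ⟨x.1.1, x.2⟩, ?_, ?_⟩, ?_⟩
        · intro x; rfl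
        · intro x; rfl
        · intro a b; rfl
      exact e.connected_iff.mp (hconn u)
  · -- pairwise disjoint
    intro u u' huu'
    exact Disjoint.preimage _ (hdisj huu')
  · -- sees iff
    intro u u' huu'
    rw [← hsees u u' huu']
    constructor
    · rintro ⟨⟨x, hxS⟩, hx, ⟨z, hzS⟩, hz, hadj⟩
      exact ⟨x, hx, z, hz, hadj⟩
    · rintro ⟨x, hx, z, hz, hadj⟩
      -- need to find an edge avoiding w
      by_cases hu : u = v
      · subst hu
        -- x ∈ X u = X v; if x = w, replace using hcon
        have hset := hcon u' (fun h => huu' h.symm)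
        have hne2 : {w' | w' ∈ X u ∧ ∃ y ∈ X u', G.Adj w' y} ≠ {w} := hset
        have hmem : x ∈ {w' | w' ∈ X u ∧ ∃ y ∈ X u', G.Adj w' y} := ⟨hx, z, hz, hadj⟩
        have : ∃ x', x' ∈ {w' | w' ∈ X u ∧ ∃ y ∈ X u', G.Adj w' y} ∧ x' ≠ w := by
          by_contra hno
          push_neg at hno
          apply hne2
          apply Set.eq_singleton_iff_unique_mem.mpr
          refine ⟨?_, fun a ha => hno a ha⟩
          have hxw := hno x hmem
          exact hxw ▸ hmem
        obtain ⟨x', ⟨hx', z', hz', hadj'⟩, hx'w⟩ := this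
        have hz'w : z' ≠ w := fun h =>
          Set.disjoint_left.mp (hdisj (fun h2 : u' = u => huu' h2.symm)) hz' (h ▸ hw)
        exact ⟨⟨x', Set.mem_iUnion.mpr ⟨u, hx'⟩, hx'w⟩, hx',
          ⟨z', Set.mem_iUnion.mpr ⟨u', hz'⟩, hz'w⟩, hz', hadj'⟩
      · have hxw : x ≠ w := fun h => Set.disjoint_left.mp (hdisj hu) hx (h ▸ hw)
        by_cases hu' : u' = v
        · subst hu'
          have hset := hcon u (fun h => hu h)
          -- here z ∈ X u' = X v could be w
          have hne2 : {w' | w' ∈ X u' ∧ ∃ y ∈ X u, G.Adj w' y} ≠ {w} := hcon u hu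
          have hmem : z ∈ {w' | w' ∈ X u' ∧ ∃ y ∈ X u, G.Adj w' y} := ⟨hz, x, hx, hadj.symm⟩
          have : ∃ z', z' ∈ {w' | w' ∈ X u' ∧ ∃ y ∈ X u, G.Adj w' y} ∧ z' ≠ w := by
            by_contra hno
            push_neg at hno
            apply hne2
            apply Set.eq_singleton_iff_unique_mem.mpr
            refine ⟨?_, fun a ha => hno a ha⟩
            have hzw := hno z hmem
            exact hzw ▸ hmem
          obtain ⟨z', ⟨hz', x', hx', hadj'⟩, hz'w⟩ := this
          have hx'w : x' ≠ w := fun h => Set.disjoint_left.mp (hdisj hu) hx' (h ▸ hw)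
          exact ⟨⟨x', Set.mem_iUnion.mpr ⟨u, hx'⟩, hx'w⟩, hx',
            ⟨z', Set.mem_iUnion.mpr ⟨u', hz'⟩, hz'w⟩, hz', hadj'.symm⟩
        · have hzw : z ≠ w := fun h => Set.disjoint_left.mp (hdisj hu') hz (h ▸ hw)
          exact ⟨⟨x, Set.mem_iUnion.mpr ⟨u, hx⟩, hxw⟩, hx,
            ⟨z, Set.mem_iUnion.mpr ⟨u', hz⟩, hzw⟩, hz, hadj⟩
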